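/- Let π be the representation of O₂ on l²(ℕ) given by π(t_i)e_n = e_{2(n-1)+i}, and let (a_m) be the recursive fermion system built from π(t₁), π(t₂). Then for every m ≥ 1: a_m* e₁ = e_{2^{m−1}+1} and a_m e₁ = 0. -/

import Mathlib

open ContinuousLinearMap

/-- The standard orthonormal basis of `l²(ℕ)`, indexed by the positive integers. -/
noncomputable def stdBasis (n : ℕ) : lp (fun _ : ℕ => ℂ) 2 :=
  lp.single 2 (n - 1) 1

namespace RFSAux

noncomputable abbrev E (k : ℕ) : lp (fun _ : ℕ => ℂ) 2 := lp.single 2 k 1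

lemma stdBasis_eq (k : ℕ) : stdBasis (k + 1) = E k := by
  simp [stdBasis, E]

lemma coord (x : lp (fun _ : ℕ => ℂ) 2) (k : ℕ) :
    (inner ℂ (E k) x : ℂ) = x k := by
  rw [lp.inner_single_left]
  simp

lemma lp_ext {x y : lp (fun _ : ℕ => ℂ) 2}
    (h : ∀ k, (inner ℂ (E k) x : ℂ) = inner ℂ (E k) y) : x = y := by
  apply lp.ext
  funext k
  have := h k
  rwa [coord, coord] at this

lemma E_apply (i k : ℕ) : (E i : ∀ _ : ℕ, ℂ) k = if k = i then 1 else 0 := by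
  simp [E, lp.single_apply, Pi.single_apply]

lemma inner_E (i k : ℕ) : (inner ℂ (E i) (E k) : ℂ) = if i = k then 1 else 0 := by
  rw [coord, E_apply, eq_comm]

end RFSAux

open RFSAux in
theorem RFS_one_particle_states_on_l2
    (T₁ T₂ : lp (fun _ : ℕ => ℂ) 2 →L[ℂ] lp (fun _ : ℕ => ℂ) 2)
    (hT₁ : ∀ n : ℕ, 1 ≤ n → T₁ (stdBasis n) = stdBasis (2 * (n - 1) + 1))
    (hT₂ : ∀ n : ℕ, 1 ≤ n → T₂ (stdBasis n) = stdBasis (2 * (n - 1) + 2))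
    (a : ℕ → lp (fun _ : ℕ => ℂ) 2 →L[ℂ] lp (fun _ : ℕ => ℂ) 2)
    (ha1 : a 1 = T₁ * adjoint T₂)
    (harec : ∀ n : ℕ, 1 ≤ n →
      a (n + 1) = T₁ * a n * adjoint T₁ - T₂ * a n * adjoint T₂) :
    ∀ m : ℕ, 1 ≤ m →
      adjoint (a m) (stdBasis 1) = stdBasis (2 ^ (m - 1) + 1) ∧
      a m (stdBasis 1) = 0 := by
  have hT₁' : ∀ k : ℕ, T₁ (E k) = E (2 * k) := by
    intro k
    have := hT₁ (k + 1) (Nat.le_add_left 1 k)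
    simpa [stdBasis_eq] using this
  have hT₂' : ∀ k : ℕ, T₂ (E k) = E (2 * k + 1) := by
    intro k
    have := hT₂ (k + 1) (Nat.le_add_left 1 k)
    rw [stdBasis_eq] at this
    simpa [Nat.add_sub_cancel, stdBasis_eq] using this
  -- adjoint actions on e₀
  have hT₁a : adjoint T₁ (E 0) = E 0 := by
    apply lp_ext
    intro k
    rw [adjoint_inner_right, hT₁', inner_E, inner_E]
    simp
  have hT₂a : adjoint T₂ (E 0) = 0 := by
    apply lp_ext
    intro k
    rw [adjoint_inner_right, hT₂', inner_E]
    simp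
  -- main induction
  have key : ∀ m : ℕ, adjoint (a (m + 1)) (E 0) = E (2 ^ m) ∧ a (m + 1) (E 0) = 0 := by
    intro m
    induction m with
    | zero =>
      rw [ha1]
      constructor
      · have : adjoint (T₁ * adjoint T₂) = T₂ ∘L adjoint T₁ := by
          rw [mul_def, adjoint_comp, adjoint_adjoint]
        rw [this, ContinuousLinearMap.comp_apply, hT₁a]
        have h2 := hT₂' 0
        simp only [mul_zero, zero_add] at h2
        rw [h2, pow_zero]
      · rw [mul_def, ContinuousLinearMap.comp_apply, hT₂a, map_zero]
    | succ n ih =>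
      obtain ⟨ih1, ih2⟩ := ih
      rw [harec (n + 1) (Nat.le_add_left 1 n)]
      constructor
      · have : adjoint (T₁ * a (n + 1) * adjoint T₁ - T₂ * a (n + 1) * adjoint T₂)
            = T₁ ∘L adjoint (a (n + 1)) ∘L adjoint T₁
              - T₂ ∘L adjoint (a (n + 1)) ∘L adjoint T₂ := by
          rw [map_sub]
          simp only [mul_def, adjoint_comp, adjoint_adjoint]
        rw [this]
        simp only [ContinuousLinearMap.sub_apply, ContinuousLinearMap.comp_apply]
        rw [hT₁a, hT₂a, map_zero, map_zero, sub_zero, ih1, hT₁']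
        congr 1
        ring
      · simp only [ContinuousLinearMap.sub_apply, mul_def, ContinuousLinearMap.comp_apply]
        rw [hT₁a, hT₂a, map_zero, map_zero, ih2, map_zero, sub_zero]
  intro m hm
  obtain ⟨m, rfl⟩ := Nat.exists_eq_add_of_le' hm
  have h := key m
  have e1 : stdBasis 1 = E 0 := stdBasis_eq 0
  have e2 : stdBasis (2 ^ (m + 1 - 1) + 1) = E (2 ^ m) := by
    rw [Nat.add_sub_cancel]; exact stdBasis_eq (2 ^ m)
  rw [e1, e2]
  exact h
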